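/- Let 1 < p < 3 and c > 0, and let u₀ ∈ L²(ℝ) with u₀ ≠ 0. Then there exists R₀ > 0 such that ‖ x ↦ ⟨x/R₀⟩^{-1} u₀(x) ‖_{L²(ℝ)} ≥ (c / R₀)^{1/(p-1)} · ‖ x ↦ ⟨x/R₀⟩^{-1} ‖_{L²(ℝ)}. -/

import Mathlib

open Real Set MeasureTheory

open scoped ENNReal

private theorem weight_norm_aux (R : ℝ) (hR : 0 < R) :
    eLpNorm (fun x : ℝ => (((1 + (x / R) ^ 2) ^ ((1 : ℝ) / 2) : ℝ)⁻¹ : ℝ)) 2 volume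
      = ENNReal.ofReal ((R * π) ^ ((1 : ℝ) / 2)) := by
  have h2 : ((2 : ℝ≥0∞)).toReal = 2 := by simp
  rw [eLpNorm_eq_lintegral_rpow_enorm_toReal (by norm_num) (by norm_num), h2]
  have hpt : ∀ x : ℝ, (‖(((1 + (x / R) ^ 2) ^ ((1 : ℝ) / 2) : ℝ)⁻¹ : ℝ)‖ₑ) ^ (2 : ℝ)
      = ENNReal.ofReal ((1 + (x / R) ^ 2)⁻¹) := by
    intro x
    have hb : (0 : ℝ) < 1 + (x / R) ^ 2 := by positivity
    have hbp : (0 : ℝ) < ((1 + (x / R) ^ 2) ^ ((1 : ℝ) / 2) : ℝ)⁻¹ := by positivity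
    have key : ((((1 + (x / R) ^ 2) ^ ((1 : ℝ) / 2) : ℝ)⁻¹ : ℝ)) ^ (2 : ℝ)
        = (1 + (x / R) ^ 2)⁻¹ := by
      rw [Real.inv_rpow (Real.rpow_nonneg hb.le _), ← Real.rpow_mul hb.le]
      norm_num
    rw [Real.enorm_eq_ofReal hbp.le, ENNReal.ofReal_rpow_of_pos hbp, key]
  rw [lintegral_congr hpt]
  rw [← MeasureTheory.ofReal_integral_eq_lintegral_ofReal
    ((integrable_inv_one_add_sq.comp_div hR.ne'))
    (Filter.Eventually.of_forall fun x => by positivity)]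
  have h3 : (∫ x : ℝ, (1 + (x / R) ^ 2)⁻¹) = R * π := by
    have h4 := MeasureTheory.Measure.integral_comp_div (fun y : ℝ => (1 + y ^ 2)⁻¹) R
    rw [h4, integral_univ_inv_one_add_sq, abs_of_pos hR, smul_eq_mul]
  rw [h3, ENNReal.ofReal_rpow_of_pos (by positivity)]

/-- Key step of Corollary 1.2 in dimension one: for `1 < p < 3` and any nonzero
`u₀ ∈ L²(ℝ)`, there is `R₀ > 0` such that
`‖⟨·/R₀⟩⁻¹ u₀‖_{L²} ≥ (c/R₀)^{1/(p-1)} ‖⟨·/R₀⟩⁻¹‖_{L²}`. -/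
theorem stmt_12 (p c : ℝ) (hp : 1 < p) (hp3 : p < 3) (hc : 0 < c)
    (u₀ : ℝ → ℂ) (hu₀ : MemLp u₀ 2 volume) (hne : eLpNorm u₀ 2 volume ≠ 0) :
    ∃ R₀ : ℝ, 0 < R₀ ∧
      eLpNorm (fun x : ℝ =>
          (((1 + (x / R₀) ^ 2) ^ ((1 : ℝ) / 2) : ℝ)⁻¹ : ℂ) * u₀ x) 2 volume
      ≥ ENNReal.ofReal ((c / R₀) ^ (1 / (p - 1)))
        * eLpNorm (fun x : ℝ =>
            (((1 + (x / R₀) ^ 2) ^ ((1 : ℝ) / 2) : ℝ)⁻¹ : ℝ)) 2 volume := by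
  set L := eLpNorm (fun x : ℝ =>
      ((((1 + (x / 1) ^ 2) ^ ((1 : ℝ) / 2))⁻¹ : ℝ) : ℂ) * u₀ x) 2 volume with hLdef
  have hwc : Continuous fun x : ℝ => (((1 + (x / 1) ^ 2) ^ ((1 : ℝ) / 2))⁻¹ : ℝ) := by
    apply Continuous.inv₀
    · exact (continuous_const.add ((continuous_id.div_const 1).pow 2)).rpow_const
        (fun x => Or.inl (show (0:ℝ) < 1 + (x/1)^2 by positivity).ne')
    · intro x; positivity
  have hmeas : AEStronglyMeasurable (fun x : ℝ =>
      ((((1 + (x / 1) ^ 2) ^ ((1 : ℝ) / 2))⁻¹ : ℝ) : ℂ) * u₀ x) volume :=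
    ((Complex.continuous_ofReal.comp hwc).aestronglyMeasurable).mul hu₀.1
  have hL0 : L ≠ 0 := by
    intro h
    rw [hLdef, eLpNorm_eq_zero_iff hmeas (by norm_num)] at h
    refine hne ((eLpNorm_eq_zero_iff hu₀.1 (by norm_num)).2 ?_)
    filter_upwards [h] with x hx
    have hb : (0 : ℝ) < ((1 + (x / 1) ^ 2) ^ ((1 : ℝ) / 2) : ℝ)⁻¹ := by positivity
    rcases mul_eq_zero.1 hx with h' | h'
    · exact absurd h' (by exact_mod_cast hb.ne')
    · exact h'
  have hLtop : L ≠ ⊤ := by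
    refine (lt_of_le_of_lt (eLpNorm_mono fun x => ?_) hu₀.2).ne
    have h1 : ((1 + (x / 1) ^ 2) ^ ((1 : ℝ) / 2) : ℝ)⁻¹ ≤ 1 := by
      rw [inv_le_one_iff₀]
      right
      exact Real.one_le_rpow (by nlinarith [sq_nonneg (x / 1)]) (by norm_num)
    calc ‖((((1 + (x / 1) ^ 2) ^ ((1 : ℝ) / 2))⁻¹ : ℝ) : ℂ) * u₀ x‖
        = ((1 + (x / 1) ^ 2) ^ ((1 : ℝ) / 2) : ℝ)⁻¹ * ‖u₀ x‖ := by
          rw [norm_mul, Complex.norm_real, Real.norm_of_nonneg (by positivity)]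
      _ ≤ 1 * ‖u₀ x‖ := by gcongr
      _ = ‖u₀ x‖ := one_mul _
  have hLr : 0 < L.toReal := ENNReal.toReal_pos hL0 hLtop
  set q : ℝ := 1 / (p - 1) with hqdef
  have hq0 : 0 < q := by
    rw [hqdef]; exact div_pos one_pos (by linarith)
  have hq : 1 / 2 < q := by
    rw [hqdef]
    rw [div_lt_div_iff₀ (by norm_num) (by linarith)]
    linarith
  -- eventually the RHS constant is below L
  have htend : Filter.Tendsto (fun R : ℝ => c ^ q * π ^ ((1 : ℝ) / 2) * R ^ ((1 : ℝ) / 2 - q))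
      Filter.atTop (nhds 0) := by
    have h1 : Filter.Tendsto (fun R : ℝ => R ^ ((1 : ℝ) / 2 - q)) Filter.atTop (nhds 0) := by
      have := tendsto_rpow_neg_atTop (by linarith : (0 : ℝ) < q - 1 / 2)
      simpa [neg_sub] using this
    simpa using h1.const_mul (c ^ q * π ^ ((1 : ℝ) / 2))
  have hev : ∀ᶠ R : ℝ in Filter.atTop,
      c ^ q * π ^ ((1 : ℝ) / 2) * R ^ ((1 : ℝ) / 2 - q) < L.toReal :=
    htend.eventually_lt_const hLr
  obtain ⟨R, hRlt, hR1⟩ := (hev.and (Filter.eventually_ge_atTop (1 : ℝ))).exists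
  have hR : (0 : ℝ) < R := lt_of_lt_of_le one_pos hR1
  refine ⟨R, hR, ?_⟩
  simp only [← Complex.ofReal_inv]
  rw [weight_norm_aux R hR]
  -- the real-number inequality
  have hval : (c / R) ^ q * (R * π) ^ ((1 : ℝ) / 2) ≤ L.toReal := by
    have e1 : (c / R) ^ q = c ^ q / R ^ q := Real.div_rpow hc.le hR.le q
    have e2 : (R * π) ^ ((1 : ℝ) / 2) = R ^ ((1 : ℝ) / 2) * π ^ ((1 : ℝ) / 2) :=
      Real.mul_rpow hR.le Real.pi_pos.le
    have e3 : R ^ ((1 : ℝ) / 2 - q) = R ^ ((1 : ℝ) / 2) / R ^ q := Real.rpow_sub hR _ _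
    have : (c / R) ^ q * (R * π) ^ ((1 : ℝ) / 2)
        = c ^ q * π ^ ((1 : ℝ) / 2) * R ^ ((1 : ℝ) / 2 - q) := by
      rw [e1, e2, e3]; ring
    rw [this]
    exact hRlt.le
  calc ENNReal.ofReal ((c / R) ^ q) * ENNReal.ofReal ((R * π) ^ ((1 : ℝ) / 2))
      = ENNReal.ofReal ((c / R) ^ q * (R * π) ^ ((1 : ℝ) / 2)) :=
        (ENNReal.ofReal_mul (by positivity)).symm
    _ ≤ ENNReal.ofReal L.toReal := ENNReal.ofReal_le_ofReal hval
    _ = L := ENNReal.ofReal_toReal hLtop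
    _ ≤ _ := by
        refine eLpNorm_mono fun x => ?_
        have hb1 : (0 : ℝ) < (1 + (x / R) ^ 2) ^ ((1 : ℝ) / 2) := by positivity
        have hmono : ((1 + (x / 1) ^ 2) ^ ((1 : ℝ) / 2) : ℝ)⁻¹
            ≤ ((1 + (x / R) ^ 2) ^ ((1 : ℝ) / 2) : ℝ)⁻¹ := by
          have hsq : (x / R) ^ 2 ≤ (x / 1) ^ 2 := by
            rw [div_pow, div_pow, one_pow]
            rw [div_le_div_iff₀ (by positivity) one_pos]
            have hR2 : (1 : ℝ) ≤ R ^ 2 := by nlinarith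
            nlinarith [sq_nonneg x]
          exact inv_anti₀ hb1
            (Real.rpow_le_rpow (by positivity) (by linarith) (by norm_num))
        calc ‖((((1 + (x / 1) ^ 2) ^ ((1 : ℝ) / 2))⁻¹ : ℝ) : ℂ) * u₀ x‖
            = ((1 + (x / 1) ^ 2) ^ ((1 : ℝ) / 2) : ℝ)⁻¹ * ‖u₀ x‖ := by
              rw [norm_mul, Complex.norm_real, Real.norm_of_nonneg (by positivity)]
          _ ≤ ((1 + (x / R) ^ 2) ^ ((1 : ℝ) / 2) : ℝ)⁻¹ * ‖u₀ x‖ := by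
              gcongr
          _ = ‖((((1 + (x / R) ^ 2) ^ ((1 : ℝ) / 2))⁻¹ : ℝ) : ℂ) * u₀ x‖ := by
              rw [norm_mul, Complex.norm_real, Real.norm_of_nonneg (by positivity)]
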